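/- Let n ≥ 1, let F ⊆ Fin n, and let a ≠ b be elements of Fin n. Define g_{a,b} : Fin n → Fin n by g_{a,b}(x) = a if x ∈ F and g_{a,b}(x) = b otherwise, and similarly g_{b,a} with the roles of a and b exchanged. Then for every function h : Fin n → Fin n, h(g_{a,b}(h(g_{a,b}(0)))) ∈ F if and only if h(g_{b,a}(h(g_{b,a}(0)))) ∈ F. (Equivalently, in the DFA with states Fin n → Fin n, alphabet Fin n → Fin n, initial state the identity, transition δ(g, f) = f ∘ g, and final states {g | g(g(0)) ∈ F}, the states g_{a,b} and g_{b,a} are not separable.) -/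
import Mathlib


attribute [local instance] Classical.propDecidable

/-- in the `SRoot` automaton, the states `g_{a,b}` and `g_{b,a}` are not
separable: for every `h`, `h (g_{a,b} (h (g_{a,b} 0))) ∈ F` iff
`h (g_{b,a} (h (g_{b,a} 0))) ∈ F`. -/
theorem stmt5 (n : ℕ) (hn : 1 ≤ n) (F : Set (Fin n)) (a b : Fin n) (hab : a ≠ b)
    (gab gba : Fin n → Fin n)
    (hgab : ∀ x, gab x = if x ∈ F then a else b)
    (hgba : ∀ x, gba x = if x ∈ F then b else a)
    (h : Fin n → Fin n) :
    h (gab (h (gab ⟨0, hn⟩))) ∈ F ↔ h (gba (h (gba ⟨0, hn⟩))) ∈ F := by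
  by_cases h0 : (⟨0, hn⟩ : Fin n) ∈ F <;>
    by_cases ha : h a ∈ F <;> by_cases hb : h b ∈ F <;>
    simp [hgab, hgba, h0, ha, hb]
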